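/- arXiv:2404.17190 — 7 statements merged into one kernel-verified Lean document; each statement's English description precedes it below -/
import Mathlib

section
/- Let h be a Legendre function with domain X and f convex and differentiable on the interior of dom h. If Lh − f is convex on int dom h, then f(y) ≤ f(x) + ⟨∇f(x), y − x⟩ + L·D_h(y, x) for all x, y in int dom h, where D_h(y,x) = h(y) − h(x) − ⟨∇h(x), y − x⟩. -/
open scoped RealInnerProductSpace
open Filter

/-- First-order condition for a convex function on an inner product space:
if `g` is convex on `s` and has Fréchet derivative `g'` at `x ∈ s`, then
`g x + g' (y - x) ≤ g y` for any `y ∈ s`. -/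
lemma convexOn_first_order {E : Type*} [NormedAddCommGroup E] [NormedSpace ℝ E]
    {s : Set E} {g : E → ℝ} (hg : ConvexOn ℝ s g) {x y : E} (hx : x ∈ s) (hy : y ∈ s)
    {g' : E →L[ℝ] ℝ} (hd : HasFDerivAt g g' x) :
    g x + g' (y - x) ≤ g y := by
  set A : ℝ →ᵃ[ℝ] E := AffineMap.lineMap x y with hA
  have hA0 : A 0 = x := AffineMap.lineMap_apply_zero x y
  have hA1 : A 1 = y := AffineMap.lineMap_apply_one x y
  have hφ : ConvexOn ℝ (A ⁻¹' s) (g ∘ A) := hg.comp_affineMap A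
  have h0 : (0 : ℝ) ∈ A ⁻¹' s := by simp [Set.mem_preimage, hA0, hx]
  have h1 : (1 : ℝ) ∈ A ⁻¹' s := by simp [Set.mem_preimage, hA1, hy]
  have hAd : HasDerivAt (fun t : ℝ => A t) (y - x) 0 := by
    have : HasDerivAt (fun t : ℝ => t • (y - x) + x) ((1 : ℝ) • (y - x)) 0 :=
      ((hasDerivAt_id (0 : ℝ)).smul_const (y - x)).add_const x
    have hfun : (fun t : ℝ => A t) = fun t : ℝ => t • (y - x) + x := by
      funext t
      rw [hA, AffineMap.lineMap_apply, vsub_eq_sub, vadd_eq_add]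
    rw [hfun]
    simpa using this
  have hd0 : HasDerivAt (g ∘ A) (g' (y - x)) 0 := by
    have hd' : HasFDerivAt g g' ((fun t : ℝ => A t) 0) := by simpa [hA0] using hd
    exact hd'.comp_hasDerivAt (0 : ℝ) hAd
  have := hφ.le_slope_of_hasDerivAt h0 h1 one_pos hd0
  rw [slope_def_field] at this
  simp only [Function.comp_apply, hA0, hA1] at this
  have : g' (y - x) ≤ g y - g x := by
    simpa [div_one] using this
  linarith

/-- Bregman descent lemma: if `L•h − f` is convex on the interior of the domain of the
Legendre function `h`, then `f(y) ≤ f(x) + ⟨∇f(x), y−x⟩ + L D_h(y,x)`. -/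
theorem stmt4 (n : ℕ) (X : Set (EuclideanSpace ℝ (Fin n)))
    (hXclosed : IsClosed X) (hXconv : Convex ℝ X) (hXint : (interior X).Nonempty)
    (h : EuclideanSpace ℝ (Fin n) → ℝ)
    (hhconv : ConvexOn ℝ X h) (hhlsc : LowerSemicontinuous h)
    (hhdiff : DifferentiableOn ℝ h (interior X))
    (hhstrict : StrictConvexOn ℝ (interior X) h)
    (hhLeg : ∀ (z : ℕ → EuclideanSpace ℝ (Fin n)) (y : EuclideanSpace ℝ (Fin n)),
      (∀ k, z k ∈ interior X) → y ∈ frontier X → Tendsto z atTop (nhds y) →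
      Tendsto (fun k => ‖gradient h (z k)‖) atTop atTop)
    (f : EuclideanSpace ℝ (Fin n) → ℝ)
    (hfconv : ConvexOn ℝ (interior X) f)
    (hfdiff : DifferentiableOn ℝ f (interior X))
    (L : ℝ) (hL : 0 < L)
    (hrel : ConvexOn ℝ (interior X) (fun z => L * h z - f z)) :
    ∀ x ∈ interior X, ∀ y ∈ interior X,
      f y ≤ f x + ⟪gradient f x, y - x⟫ +
        L * (h y - h x - ⟪gradient h x, y - x⟫) := by
  intro x hx y hy
  have hmem : interior X ∈ nhds x := isOpen_interior.mem_nhds hx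
  have hhx : DifferentiableAt ℝ h x := hhdiff.differentiableAt hmem
  have hfx : DifferentiableAt ℝ f x := hfdiff.differentiableAt hmem
  -- derivative of g := L*h - f at x
  have hd : HasFDerivAt (fun z => L * h z - f z)
      (L • fderiv ℝ h x - fderiv ℝ f x) x :=
    (hhx.hasFDerivAt.const_mul L).sub hfx.hasFDerivAt
  have key := convexOn_first_order hrel hx hy hd
  have hinner_f : ⟪gradient f x, y - x⟫ = fderiv ℝ f x (y - x) :=
    InnerProductSpace.toDual_symm_apply
  have hinner_h : ⟪gradient h x, y - x⟫ = fderiv ℝ h x (y - x) :=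
    InnerProductSpace.toDual_symm_apply
  simp only [ContinuousLinearMap.sub_apply, ContinuousLinearMap.smul_apply,
    smul_eq_mul] at key
  rw [hinner_f, hinner_h]
  linarith
end

section
/- Let A ∈ ℝ₊^{m×n} have non-null rows a_i and b ∈ ℝ₊₊^m. The function f(x) = KL(Ax, b) = Σᵢ (⟨aᵢ,x⟩ log(⟨aᵢ,x⟩/bᵢ) − ⟨aᵢ,x⟩ + bᵢ) is L-smooth relative to the Boltzmann–Shannon entropy h(x) = Σⱼ xⱼ log xⱼ on int ℝ₊ⁿ, with L = maxⱼ Σᵢ aᵢⱼ; that is, Lh − f is convex on int ℝ₊ⁿ. -/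
open Real Finset

/-- Joint convexity of `(u, v) ↦ u * log (u / v)` on positives (two-point log-sum). -/
lemma stmt9_k_conv (a c u1 u2 v1 v2 : ℝ) (ha : 0 ≤ a) (hc : 0 ≤ c) (hac : a + c = 1)
    (hu1 : 0 < u1) (hu2 : 0 < u2) (hv1 : 0 < v1) (hv2 : 0 < v2) :
    (a*u1+c*u2) * Real.log ((a*u1+c*u2)/(a*v1+c*v2)) ≤
      a * (u1 * Real.log (u1/v1)) + c * (u2 * Real.log (u2/v2)) := by
  have hw : 0 < a*v1+c*v2 := by
    rcases eq_or_lt_of_le ha with h|h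
    · have : c = 1 := by linarith
      simp [← h, this, hv2]
    · nlinarith [mul_nonneg hc hv2.le, mul_pos h hv1]
  have key := Real.convexOn_mul_log.2 (Set.mem_Ici.2 (show (0:ℝ) ≤ u1/v1 by positivity))
    (Set.mem_Ici.2 (show (0:ℝ) ≤ u2/v2 by positivity))
    (show (0:ℝ) ≤ a*v1/(a*v1+c*v2) by positivity)
    (show (0:ℝ) ≤ c*v2/(a*v1+c*v2) by positivity)
    (show a*v1/(a*v1+c*v2) + c*v2/(a*v1+c*v2) = 1 by field_simp)
  simp only [smul_eq_mul] at key
  have h1 : a*v1/(a*v1+c*v2) * (u1/v1) + c*v2/(a*v1+c*v2) * (u2/v2) =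
      (a*u1+c*u2)/(a*v1+c*v2) := by
    field_simp
  rw [h1] at key
  have := mul_le_mul_of_nonneg_left key hw.le
  calc (a*u1+c*u2) * Real.log ((a*u1+c*u2)/(a*v1+c*v2))
      = (a*v1+c*v2) * ((a*u1+c*u2)/(a*v1+c*v2) * Real.log ((a*u1+c*u2)/(a*v1+c*v2))) := by
        field_simp
    _ ≤ (a*v1+c*v2) * (a*v1/(a*v1+c*v2) * (u1/v1 * Real.log (u1/v1)) +
        c*v2/(a*v1+c*v2) * (u2/v2 * Real.log (u2/v2))) := this
    _ = a * (u1 * Real.log (u1/v1)) + c * (u2 * Real.log (u2/v2)) := by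
        field_simp

/-- Identity: `∑ wⱼ uⱼ log uⱼ − s log s = ∑ wⱼ (uⱼ log (uⱼ / s))` when `s = ∑ wⱼ uⱼ`. -/
lemma stmt9_entropy_id {n : ℕ} (w u : Fin n → ℝ) (hu : ∀ j, 0 < u j)
    (hs : 0 < ∑ j, w j * u j) :
    ∑ j, w j * (u j * Real.log (u j)) - (∑ j, w j * u j) * Real.log (∑ j, w j * u j)
      = ∑ j, w j * (u j * Real.log (u j / (∑ j, w j * u j))) := by
  have : ∀ j, w j * (u j * Real.log (u j / (∑ j, w j * u j)))
      = w j * (u j * Real.log (u j)) - w j * u j * Real.log (∑ j, w j * u j) := by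
    intro j
    rw [Real.log_div (hu j).ne' hs.ne']
    ring
  rw [Finset.sum_congr rfl (fun j _ => this j), Finset.sum_sub_distrib,
    ← Finset.sum_mul]

/-- Row convexity: convexity of `x ↦ ∑ⱼ wⱼ φ(xⱼ) − φ(⟨w,x⟩)` on positives. -/
lemma stmt9_row_conv {n : ℕ} (w : Fin n → ℝ) (hw : ∀ j, 0 ≤ w j)
    (x y : Fin n → ℝ) (hx : ∀ j, 0 < x j) (hy : ∀ j, 0 < y j)
    (a c : ℝ) (ha : 0 ≤ a) (hc : 0 ≤ c) (hac : a + c = 1)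
    (hsx : 0 < ∑ j, w j * x j) (hsy : 0 < ∑ j, w j * y j) :
    a * ((∑ j, w j * x j) * Real.log (∑ j, w j * x j))
      + c * ((∑ j, w j * y j) * Real.log (∑ j, w j * y j))
      - (a * (∑ j, w j * x j) + c * (∑ j, w j * y j)) *
          Real.log (a * (∑ j, w j * x j) + c * (∑ j, w j * y j))
      ≤ ∑ j, w j * (a * (x j * Real.log (x j)) + c * (y j * Real.log (y j))
          - (a * x j + c * y j) * Real.log (a * x j + c * y j)) := by
  set sx := ∑ j, w j * x j with hsxd
  set sy := ∑ j, w j * y j with hsyd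
  have hz : ∀ j, 0 < a * x j + c * y j := by
    intro j
    rcases eq_or_lt_of_le ha with h|h
    · have : c = 1 := by linarith
      simp [← h, this, hy j]
    · nlinarith [mul_nonneg hc (hy j).le, mul_pos h (hx j)]
  have hsz : (∑ j, w j * (a * x j + c * y j)) = a * sx + c * sy := by
    simp only [hsxd, hsyd, Finset.mul_sum, ← Finset.sum_add_distrib]
    exact Finset.sum_congr rfl (fun j _ => by ring)
  have hszpos : 0 < ∑ j, w j * (a * x j + c * y j) := by
    rw [hsz]
    rcases eq_or_lt_of_le ha with h|h
    · have : c = 1 := by linarith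
      simp [← h, this, hsy]
    · nlinarith [mul_nonneg hc hsy.le, mul_pos h hsx]
  -- rewrite into log-ratio form
  have key : ∑ j, w j * ((a * x j + c * y j) *
        Real.log ((a * x j + c * y j) / (a * sx + c * sy)))
      ≤ ∑ j, w j * (a * (x j * Real.log (x j / sx)) + c * (y j * Real.log (y j / sy))) := by
    refine Finset.sum_le_sum (fun j _ => ?_)
    refine mul_le_mul_of_nonneg_left ?_ (hw j)
    exact stmt9_k_conv a c (x j) (y j) sx sy ha hc hac (hx j) (hy j) hsx hsy
  have idx := stmt9_entropy_id w x hx hsx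
  have idy := stmt9_entropy_id w y hy hsy
  have idz := stmt9_entropy_id w (fun j => a * x j + c * y j) hz hszpos
  rw [hsz] at idz
  -- combine
  have expand : ∑ j, w j * (a * (x j * Real.log (x j / sx)) + c * (y j * Real.log (y j / sy)))
      = a * (∑ j, w j * (x j * Real.log (x j / sx)))
        + c * (∑ j, w j * (y j * Real.log (y j / sy))) := by
    simp only [Finset.mul_sum, ← Finset.sum_add_distrib]
    exact Finset.sum_congr rfl (fun j _ => by ring)
  rw [expand, ← idx, ← idy] at key
  have expand2 : ∑ j, w j * (a * (x j * Real.log (x j)) + c * (y j * Real.log (y j))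
        - (a * x j + c * y j) * Real.log (a * x j + c * y j))
      = a * (∑ j, w j * (x j * Real.log (x j))) + c * (∑ j, w j * (y j * Real.log (y j)))
        - ∑ j, w j * ((a * x j + c * y j) * Real.log (a * x j + c * y j)) := by
    simp only [Finset.mul_sum, ← Finset.sum_add_distrib, ← Finset.sum_sub_distrib]
    exact Finset.sum_congr rfl (fun j _ => by ring)
  rw [expand2]
  rw [← idz] at key
  linarith

/-- Relative smoothness of the Kullback–Leibler objective `f(x) = KL(Ax, b)` with respect
to the Boltzmann–Shannon entropy, with constant `L = maxⱼ Σᵢ aᵢⱼ`. -/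
theorem stmt9 (m n : ℕ) (hn : 0 < n) (A : Matrix (Fin m) (Fin n) ℝ)
    (hA : ∀ i j, 0 ≤ A i j) (hrows : ∀ i, A i ≠ 0)
    (b : Fin m → ℝ) (hb : ∀ i, 0 < b i)
    (L : ℝ)
    (hLdef : L = Finset.univ.sup'
      ⟨(⟨0, hn⟩ : Fin n), Finset.mem_univ _⟩ (fun j => ∑ i, A i j)) :
    ConvexOn ℝ {x : Fin n → ℝ | ∀ j, 0 < x j}
      (fun x => L * (∑ j, x j * Real.log (x j)) -
        ∑ i, ((∑ j, A i j * x j) * Real.log ((∑ j, A i j * x j) / b i)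
          - (∑ j, A i j * x j) + b i)) := by
  have hcol : ∀ j, (∑ i, A i j) ≤ L := by
    intro j
    rw [hLdef]
    exact Finset.le_sup' (fun j => ∑ i, A i j) (Finset.mem_univ j)
  have hrowpos : ∀ (u : Fin n → ℝ), (∀ j, 0 < u j) → ∀ i, 0 < ∑ j, A i j * u j := by
    intro u hu i
    obtain ⟨j, hj⟩ := Function.ne_iff.1 (hrows i)
    refine Finset.sum_pos' (fun j _ => mul_nonneg (hA i j) (hu j).le)
      ⟨j, Finset.mem_univ j, ?_⟩
    exact mul_pos (lt_of_le_of_ne (hA i j) (Ne.symm hj)) (hu j)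
  constructor
  · intro x hx y hy a c ha hc hac j
    simp only [Pi.add_apply, Pi.smul_apply, smul_eq_mul]
    rcases eq_or_lt_of_le ha with h|h
    · have : c = 1 := by linarith
      simpa [← h, this] using hy j
    · nlinarith [mul_nonneg hc (hy j).le, mul_pos h (hx j)]
  · intro x hx y hy a c ha hc hac
    simp only [Set.mem_setOf_eq] at hx hy
    simp only [Pi.add_apply, Pi.smul_apply, smul_eq_mul]
    set sx : Fin m → ℝ := fun i => ∑ j, A i j * x j with hsxd
    set sy : Fin m → ℝ := fun i => ∑ j, A i j * y j with hsyd
    have hsx : ∀ i, 0 < sx i := hrowpos x hx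
    have hsy : ∀ i, 0 < sy i := hrowpos y hy
    have hz : ∀ j, 0 < a * x j + c * y j := by
      intro j
      rcases eq_or_lt_of_le ha with h|h
      · have : c = 1 := by linarith
        simpa [← h, this] using hy j
      · nlinarith [mul_nonneg hc (hy j).le, mul_pos h (hx j)]
    have hlin : ∀ i, (∑ j, A i j * (a * x j + c * y j)) = a * sx i + c * sy i := by
      intro i
      simp only [hsxd, hsyd, Finset.mul_sum, ← Finset.sum_add_distrib]
      exact Finset.sum_congr rfl (fun j _ => by ring)
    -- nonnegativity of the entropy gaps e_j
    have he : ∀ j, 0 ≤ a * (x j * Real.log (x j)) + c * (y j * Real.log (y j))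
        - (a * x j + c * y j) * Real.log (a * x j + c * y j) := by
      intro j
      have := Real.convexOn_mul_log.2 (Set.mem_Ici.2 (hx j).le) (Set.mem_Ici.2 (hy j).le)
        ha hc hac
      simp only [smul_eq_mul] at this
      linarith
    -- sum over rows of the per-row convexity gaps
    have main : ∑ i, (a * (sx i * Real.log (sx i)) + c * (sy i * Real.log (sy i))
          - (a * sx i + c * sy i) * Real.log (a * sx i + c * sy i))
        ≤ L * ∑ j, (a * (x j * Real.log (x j)) + c * (y j * Real.log (y j))
          - (a * x j + c * y j) * Real.log (a * x j + c * y j)) := by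
      calc ∑ i, (a * (sx i * Real.log (sx i)) + c * (sy i * Real.log (sy i))
            - (a * sx i + c * sy i) * Real.log (a * sx i + c * sy i))
          ≤ ∑ i, ∑ j, A i j * (a * (x j * Real.log (x j)) + c * (y j * Real.log (y j))
            - (a * x j + c * y j) * Real.log (a * x j + c * y j)) := by
            refine Finset.sum_le_sum (fun i _ => ?_)
            exact stmt9_row_conv (fun j => A i j) (hA i) x y hx hy a c ha hc hac
              (hsx i) (hsy i)
        _ = ∑ j, (∑ i, A i j) * (a * (x j * Real.log (x j)) + c * (y j * Real.log (y j))
            - (a * x j + c * y j) * Real.log (a * x j + c * y j)) := by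
            rw [Finset.sum_comm]
            exact Finset.sum_congr rfl (fun j _ => by rw [Finset.sum_mul])
        _ ≤ ∑ j, L * (a * (x j * Real.log (x j)) + c * (y j * Real.log (y j))
            - (a * x j + c * y j) * Real.log (a * x j + c * y j)) := by
            refine Finset.sum_le_sum (fun j _ => ?_)
            exact mul_le_mul_of_nonneg_right (hcol j) (he j)
        _ = L * ∑ j, (a * (x j * Real.log (x j)) + c * (y j * Real.log (y j))
            - (a * x j + c * y j) * Real.log (a * x j + c * y j)) := by
            rw [Finset.mul_sum]
    -- rewrite goal sums
    have hTz : ∀ i, ((∑ j, A i j * (a * x j + c * y j)) *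
          Real.log ((∑ j, A i j * (a * x j + c * y j)) / b i)
          - (∑ j, A i j * (a * x j + c * y j)) + b i)
        = (a * sx i + c * sy i) * Real.log (a * sx i + c * sy i)
          - (a * sx i + c * sy i) * Real.log (b i) - (a * sx i + c * sy i) + b i := by
      intro i
      have hp : 0 < a * sx i + c * sy i := by
        rcases eq_or_lt_of_le ha with h|h
        · have : c = 1 := by linarith
          simpa [← h, this] using hsy i
        · nlinarith [mul_nonneg hc (hsy i).le, mul_pos h (hsx i)]
      rw [hlin i, Real.log_div hp.ne' (hb i).ne']
      ring
    have hTx : ∀ i, (sx i * Real.log (sx i / b i) - sx i + b i)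
        = sx i * Real.log (sx i) - sx i * Real.log (b i) - sx i + b i := by
      intro i
      rw [Real.log_div (hsx i).ne' (hb i).ne']
      ring
    have hTy : ∀ i, (sy i * Real.log (sy i / b i) - sy i + b i)
        = sy i * Real.log (sy i) - sy i * Real.log (b i) - sy i + b i := by
      intro i
      rw [Real.log_div (hsy i).ne' (hb i).ne']
      ring
    have hsum1 : ∑ i, ((∑ j, A i j * (a * x j + c * y j)) *
          Real.log ((∑ j, A i j * (a * x j + c * y j)) / b i)
          - (∑ j, A i j * (a * x j + c * y j)) + b i)
        = a * (∑ i, (sx i * Real.log (sx i / b i) - sx i + b i))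
          + c * (∑ i, (sy i * Real.log (sy i / b i) - sy i + b i))
          + ∑ i, ((a * sx i + c * sy i) * Real.log (a * sx i + c * sy i)
              - a * (sx i * Real.log (sx i)) - c * (sy i * Real.log (sy i))) := by
      simp only [Finset.mul_sum, ← Finset.sum_add_distrib]
      refine Finset.sum_congr rfl (fun i _ => ?_)
      rw [hTz i, hTx i, hTy i]
      linear_combination (- b i) * hac
    have hsum2 : ∑ j, (a * x j + c * y j) * Real.log (a * x j + c * y j)
        = a * (∑ j, x j * Real.log (x j)) + c * (∑ j, y j * Real.log (y j))
          - ∑ j, (a * (x j * Real.log (x j)) + c * (y j * Real.log (y j))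
            - (a * x j + c * y j) * Real.log (a * x j + c * y j)) := by
      simp only [Finset.mul_sum, ← Finset.sum_add_distrib, ← Finset.sum_sub_distrib]
      refine Finset.sum_congr rfl (fun j _ => by ring)
    have hsum3 : ∑ i, ((a * sx i + c * sy i) * Real.log (a * sx i + c * sy i)
          - a * (sx i * Real.log (sx i)) - c * (sy i * Real.log (sy i)))
        = - ∑ i, (a * (sx i * Real.log (sx i)) + c * (sy i * Real.log (sy i))
          - (a * sx i + c * sy i) * Real.log (a * sx i + c * sy i)) := by
      rw [← Finset.sum_neg_distrib]
      exact Finset.sum_congr rfl (fun i _ => by ring)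
    rw [hsum1, hsum2, hsum3]
    linarith
end

section
/- For nonnegative linear regression with the Boltzmann–Shannon entropy, the Bregman gradient step has closed form: for x with strictly positive coordinates, [p_γ(x)]_j = x_j · ∏_{i=1}^m (⟨a_i, x⟩ / b_i)^{−γ a_{ij}}, and p_γ(x) again has strictly positive coordinates. -/
lemma key_le (c t : ℝ) (ht : 0 ≤ t) :
    -(Real.exp (-(1+c))) ≤ t * Real.log t + t * c := by
  rcases ht.eq_or_lt with h | h
  · simp [← h]
    positivity
  · set s := Real.exp (-(1+c)) with hs
    have hsp : 0 < s := Real.exp_pos _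
    have hlog : Real.log (s / t) ≤ s / t - 1 := Real.log_le_sub_one_of_pos (by positivity)
    rw [Real.log_div hsp.ne' h.ne', Real.log_exp] at hlog
    have h2 := mul_le_mul_of_nonneg_right hlog h.le
    have h3 : (s / t - 1) * t = s - t := by field_simp
    rw [h3] at h2
    nlinarith

lemma key_lt (c t : ℝ) (ht : 0 ≤ t) (hne : t ≠ Real.exp (-(1+c))) :
    -(Real.exp (-(1+c))) < t * Real.log t + t * c := by
  rcases ht.eq_or_lt with h | h
  · simp [← h]
    positivity
  · set s := Real.exp (-(1+c)) with hs
    have hsp : 0 < s := Real.exp_pos _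
    have hne1 : s / t ≠ 1 := by
      intro hh
      exact hne (by field_simp at hh; linarith)
    have hlog : Real.log (s / t) < s / t - 1 := Real.log_lt_sub_one_of_pos (by positivity) hne1
    rw [Real.log_div hsp.ne' h.ne', Real.log_exp] at hlog
    have h2 := mul_lt_mul_of_pos_right hlog h
    have h3 : (s / t - 1) * t = s - t := by field_simp
    rw [h3] at h2
    nlinarith

/-- Closed form of the Bregman gradient step for nonnegative linear regression with the
Boltzmann–Shannon entropy: `[p_γ(x)]ⱼ = xⱼ · ∏ᵢ (⟨aᵢ,x⟩/bᵢ)^{−γ aᵢⱼ}`, which has strictly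
positive coordinates. -/
theorem stmt10 (m n : ℕ) (A : Matrix (Fin m) (Fin n) ℝ)
    (hA : ∀ i j, 0 ≤ A i j) (hrows : ∀ i, A i ≠ 0)
    (b : Fin m → ℝ) (hb : ∀ i, 0 < b i)
    (γ : ℝ) (hγ : 0 < γ)
    (x : Fin n → ℝ) (hx : ∀ j, 0 < x j)
    (p : Fin n → ℝ) (hpmem : ∀ j, 0 ≤ p j)
    (hpmin : IsMinOn
      (fun y : Fin n → ℝ => (∑ j, y j * Real.log (y j)) +
        ∑ j, y j * (γ * (∑ i, A i j * Real.log ((∑ j', A i j' * x j') / b i))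
          - (1 + Real.log (x j))))
      {y : Fin n → ℝ | ∀ j, 0 ≤ y j} p) :
    (∀ j, 0 < p j) ∧
    (∀ j, p j = x j * ∏ i, ((∑ j', A i j' * x j') / b i) ^ (-(γ * A i j))) := by
  set r : Fin m → ℝ := fun i => (∑ j', A i j' * x j') / b i with hr
  have hrpos : ∀ i, 0 < r i := by
    intro i
    apply div_pos _ (hb i)
    obtain ⟨j0, hj0⟩ := Function.ne_iff.mp (hrows i)
    exact Finset.sum_pos' (fun j _ => mul_nonneg (hA i j) (hx j).le)
      ⟨j0, Finset.mem_univ _, mul_pos ((hA i j0).lt_of_ne (Ne.symm hj0)) (hx j0)⟩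
  set c : Fin n → ℝ := fun j => γ * (∑ i, A i j * Real.log (r i)) - (1 + Real.log (x j)) with hc
  set q : Fin n → ℝ := fun j => Real.exp (-(1 + c j)) with hq
  have hqpos : ∀ j, 0 < q j := fun j => Real.exp_pos _
  -- closed form of q
  have hqform : ∀ j, q j = x j * ∏ i, (r i) ^ (-(γ * A i j)) := by
    intro j
    have : ∏ i, (r i) ^ (-(γ * A i j)) = Real.exp (∑ i, Real.log (r i) * (-(γ * A i j))) := by
      rw [Real.exp_sum]
      exact Finset.prod_congr rfl fun i _ => Real.rpow_def_of_pos (hrpos i) _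
    rw [this, hq]
    simp only [hc]
    have h1 : γ * (∑ i, A i j * Real.log (r i))
        = -(∑ i, Real.log (r i) * (-(γ * A i j))) := by
      rw [Finset.mul_sum, ← Finset.sum_neg_distrib]
      exact Finset.sum_congr rfl fun i _ => by ring
    rw [show -(1 + (γ * (∑ i, A i j * Real.log (r i)) - (1 + Real.log (x j))))
        = Real.log (x j) + (∑ i, Real.log (r i) * (-(γ * A i j))) by rw [h1]; ring]
    rw [Real.exp_add, Real.exp_log (hx j)]
  -- p = q
  have hpq : ∀ j, p j = q j := by
    by_contra hcon
    push_neg at hcon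
    obtain ⟨j0, hj0⟩ := hcon
    have hmin := hpmin (a := q) (fun j => (hqpos j).le)
    simp only [Set.mem_setOf_eq] at hmin
    have hfq : (∑ j, q j * Real.log (q j)) + ∑ j, q j * c j = ∑ j, -(q j) := by
      rw [← Finset.sum_add_distrib]
      refine Finset.sum_congr rfl fun j _ => ?_
      rw [hq]
      simp only
      rw [Real.log_exp]
      ring
    have hfp : ∑ j, -(q j) < (∑ j, p j * Real.log (p j)) + ∑ j, p j * c j := by
      rw [← Finset.sum_add_distrib]
      refine Finset.sum_lt_sum (fun j _ => key_le (c j) (p j) (hpmem j)) ⟨j0, Finset.mem_univ _, ?_⟩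
      exact key_lt (c j0) (p j0) (hpmem j0) hj0
    rw [← hfq] at hfp
    exact absurd hmin (not_le.mpr hfp)
  exact ⟨fun j => (hpq j) ▸ hqpos j, fun j => (hpq j).trans (hqform j)⟩
end

section
/- If A ∈ ℝ₊^{m×n} is full-rank (ker A = {0}) with nonzero rows and b ∈ ℝ₊₊^m, then f(x) = KL(Ax, b) admits a unique minimizer over ℝ₊ⁿ. -/
open Real

noncomputable def klPhi (b t : ℝ) : ℝ := t * Real.log (t / b) - t + b

lemma klPhi_eq (b : ℝ) (hb : 0 < b) {t : ℝ} (ht : 0 ≤ t) :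
    klPhi b t = t * Real.log t + (-(Real.log b) - 1) * t + b := by
  rcases eq_or_lt_of_le ht with h | h
  · simp [klPhi, ← h]
  · rw [klPhi, Real.log_div h.ne' hb.ne']; ring

lemma klPhi_nonneg (b : ℝ) (hb : 0 < b) {t : ℝ} (ht : 0 ≤ t) : 0 ≤ klPhi b t := by
  rcases eq_or_lt_of_le ht with h | h
  · simp [klPhi, ← h, hb.le]
  · have h1 : Real.log (b / t) ≤ b / t - 1 := Real.log_le_sub_one_of_pos (by positivity)
    have h2 : Real.log (b / t) = Real.log b - Real.log t := Real.log_div hb.ne' h.ne'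
    have h3 : Real.log (t / b) = Real.log t - Real.log b := Real.log_div h.ne' hb.ne'
    have h4 : t * Real.log (t / b) ≥ t - b := by
      rw [h3]
      have h5 : Real.log b - Real.log t ≤ b / t - 1 := by rw [← h2]; exact h1
      have h6 : t * (Real.log t - Real.log b) ≥ t * (1 - b / t) := by
        apply mul_le_mul_of_nonneg_left _ h.le
        linarith
      have h7 : t * (1 - b / t) = t - b := by field_simp
      linarith
    simp only [klPhi]; linarith

lemma klPhi_big (b : ℝ) (hb : 0 < b) {t : ℝ} (ht : b * Real.exp 2 ≤ t) : t ≤ klPhi b t := by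
  have hexp : (0:ℝ) < Real.exp 2 := Real.exp_pos 2
  have htpos : 0 < t := lt_of_lt_of_le (by positivity) ht
  have hlog : (2:ℝ) ≤ Real.log (t / b) := by
    rw [show (2:ℝ) = Real.log (Real.exp 2) by rw [Real.log_exp]]
    apply Real.log_le_log (by positivity)
    rw [le_div_iff₀ hb]; linarith [ht]
  have : 2 * t ≤ t * Real.log (t / b) := by nlinarith
  simp only [klPhi]; nlinarith [hb]

lemma klPhi_strictConvex (b : ℝ) (hb : 0 < b) {x y : ℝ} (hx : 0 ≤ x) (hy : 0 ≤ y)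
    (hxy : x ≠ y) :
    klPhi b (x/2 + y/2) < klPhi b x / 2 + klPhi b y / 2 := by
  have h := Real.strictConvexOn_mul_log.2 hx hy hxy (by norm_num : (0:ℝ) < 1/2)
    (by norm_num : (0:ℝ) < 1/2) (by norm_num)
  have hz : 0 ≤ x/2 + y/2 := by linarith
  rw [klPhi_eq b hb hx, klPhi_eq b hb hy, klPhi_eq b hb hz]
  simp only [smul_eq_mul] at h
  have hh : (1/2 : ℝ) * x + 1/2 * y = x/2 + y/2 := by ring
  rw [hh] at h
  nlinarith [h]

lemma klPhi_convex (b : ℝ) (hb : 0 < b) {x y : ℝ} (hx : 0 ≤ x) (hy : 0 ≤ y) :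
    klPhi b (x/2 + y/2) ≤ klPhi b x / 2 + klPhi b y / 2 := by
  rcases eq_or_ne x y with h | h
  · subst h
    have : x/2 + x/2 = x := by ring
    rw [this]
    linarith
  · exact (klPhi_strictConvex b hb hx hy h).le

lemma klPhi_continuous (b : ℝ) : Continuous (klPhi b) := by
  have h1 : Continuous fun t : ℝ => t * Real.log (t / b) := by
    rcases eq_or_ne b 0 with rfl | hb
    · simpa [div_zero] using (continuous_const : Continuous fun _ : ℝ => (0:ℝ))
    · have : (fun t : ℝ => t * Real.log (t / b)) = fun t => (t / b * Real.log (t / b)) * b := by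
        funext t; field_simp
      rw [this]
      exact (Real.continuous_mul_log.comp (continuous_id.div_const b)).mul continuous_const
  exact (h1.sub continuous_id).add continuous_const

/-- If `A` is injective with nonnegative entries and nonzero rows and `b > 0`, then
`f(x) = KL(Ax, b)` has a unique minimizer over the nonnegative orthant. -/
theorem stmt11 (m n : ℕ) (A : Matrix (Fin m) (Fin n) ℝ)
    (hA : ∀ i j, 0 ≤ A i j) (hrows : ∀ i, A i ≠ 0)
    (hker : ∀ x : Fin n → ℝ, A.mulVec x = 0 → x = 0)
    (b : Fin m → ℝ) (hb : ∀ i, 0 < b i) :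
    ∃ xstar : Fin n → ℝ, (∀ j, 0 ≤ xstar j) ∧
      IsMinOn (fun x : Fin n → ℝ =>
          ∑ i, ((∑ j, A i j * x j) * Real.log ((∑ j, A i j * x j) / b i)
            - (∑ j, A i j * x j) + b i))
        {x : Fin n → ℝ | ∀ j, 0 ≤ x j} xstar ∧
      ∀ y : Fin n → ℝ, (∀ j, 0 ≤ y j) →
        IsMinOn (fun x : Fin n → ℝ =>
            ∑ i, ((∑ j, A i j * x j) * Real.log ((∑ j, A i j * x j) / b i)
              - (∑ j, A i j * x j) + b i))
          {x : Fin n → ℝ | ∀ j, 0 ≤ x j} y → y = xstar := by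
  classical
  set G : (Fin n → ℝ) → ℝ := fun x => ∑ i, klPhi (b i) (A.mulVec x i) with hG
  have hfun : (fun x : Fin n → ℝ =>
      ∑ i, ((∑ j, A i j * x j) * Real.log ((∑ j, A i j * x j) / b i)
        - (∑ j, A i j * x j) + b i)) = G := by
    funext x
    simp [G, klPhi, Matrix.mulVec, dotProduct]
  simp only [hfun]
  set S : Set (Fin n → ℝ) := {x | ∀ j, 0 ≤ x j} with hS
  by_cases hdeg : ∀ x : Fin n → ℝ, x = 0
  · refine ⟨0, fun j => le_refl 0, ?_, ?_⟩
    · rw [isMinOn_iff]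
      intro x hx
      rw [hdeg x]
    · intro y _ _
      exact hdeg y
  · push_neg at hdeg
    obtain ⟨x0, hx0⟩ := hdeg
    have hm : 0 < m := by
      rcases Nat.eq_zero_or_pos m with rfl | h
      · exact absurd (hker x0 (funext fun i => Fin.elim0 i)) hx0
      · exact h
    have hn : 0 < n := by
      rcases Nat.eq_zero_or_pos n with rfl | h
      · exact absurd (funext fun j => Fin.elim0 j) hx0
      · exact h
    have instm : Nonempty (Fin m) := Fin.pos_iff_nonempty.mp hm
    have instn : Nonempty (Fin n) := Fin.pos_iff_nonempty.mp hn
    -- nonnegativity of A x on the orthant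
    have hv_nonneg : ∀ x ∈ S, ∀ i, 0 ≤ A.mulVec x i := by
      intro x hx i
      simp only [Matrix.mulVec, dotProduct]
      exact Finset.sum_nonneg fun j _ => mul_nonneg (hA i j) (hx j)
    -- continuity of G
    have hGcont : Continuous G := by
      apply continuous_finset_sum
      intro i _
      have hmc : Continuous fun x : Fin n → ℝ => A.mulVec x i := by
        simp only [Matrix.mulVec, dotProduct]
        exact continuous_finset_sum _ fun j _ => continuous_const.mul (continuous_apply j)
      exact (klPhi_continuous (b i)).comp hmc
    -- column sums are positive
    have hcol : ∀ j, 0 < ∑ i, A i j := by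
      intro j
      rcases (Finset.sum_nonneg fun i _ => hA i j).lt_or_eq with h | h
      · exact h
      · exfalso
        have hzero : ∀ i, A i j = 0 := by
          intro i
          have := (Finset.sum_eq_zero_iff_of_nonneg (fun i _ => hA i j)).mp h.symm
          exact this i (Finset.mem_univ i)
        have : A.mulVec (Pi.single j 1) = 0 := by
          funext i
          simp [Matrix.mulVec, dotProduct, Pi.single_apply, mul_ite, hzero i]
        have h1 := congrFun (hker _ this) j
        simp at h1
    set c : ℝ := Finset.univ.inf' Finset.univ_nonempty (fun j => ∑ i, A i j) with hc
    have hcpos : 0 < c := by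
      rw [hc]
      apply (Finset.lt_inf'_iff _).mpr
      intro j _
      exact hcol j
    -- lower bound : c * ‖x‖ ≤ ∑ i, (A x) i for x in orthant
    have hlow : ∀ x ∈ S, c * ‖x‖ ≤ ∑ i, A.mulVec x i := by
      intro x hx
      have h1 : ∑ i, A.mulVec x i = ∑ j, (∑ i, A i j) * x j := by
        simp only [Matrix.mulVec, dotProduct]
        rw [Finset.sum_comm]
        exact Finset.sum_congr rfl fun j _ => (Finset.sum_mul _ _ _).symm
      have h2 : ∀ j, c * x j ≤ (∑ i, A i j) * x j := fun j =>
        mul_le_mul_of_nonneg_right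
          (Finset.inf'_le _ (Finset.mem_univ j)) (hx j)
      have h3 : ‖x‖ ≤ ∑ j, x j := by
        rw [pi_norm_le_iff_of_nonneg (Finset.sum_nonneg fun j _ => hx j)]
        intro j
        rw [Real.norm_eq_abs, abs_of_nonneg (hx j)]
        exact Finset.single_le_sum (fun k _ => hx k) (Finset.mem_univ j)
      calc c * ‖x‖ ≤ c * ∑ j, x j := mul_le_mul_of_nonneg_left h3 hcpos.le
        _ = ∑ j, c * x j := Finset.mul_sum _ _ _
        _ ≤ ∑ j, (∑ i, A i j) * x j := Finset.sum_le_sum fun j _ => h2 j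
        _ = ∑ i, A.mulVec x i := h1.symm
    set K : ℝ := ∑ i, b i with hK
    have hG0 : G 0 = K := by
      simp [G, hK, Matrix.mulVec_zero, klPhi]
    have hKpos : 0 < K := Finset.sum_pos (fun i _ => hb i) Finset.univ_nonempty
    set T : ℝ := (Finset.univ.sup' Finset.univ_nonempty b) * Real.exp 2 + (K + 1) with hT
    have hbsup : 0 < Finset.univ.sup' Finset.univ_nonempty b := by
      obtain ⟨i⟩ := instm
      exact lt_of_lt_of_le (hb i) (Finset.le_sup' _ (Finset.mem_univ i))
    have hT1 : ∀ i, b i * Real.exp 2 ≤ T := by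
      intro i
      have := mul_le_mul_of_nonneg_right
        (Finset.le_sup' b (Finset.mem_univ i)) (Real.exp_pos 2).le
      rw [hT]; linarith [hKpos]
    have hT2 : K + 1 ≤ T := by
      rw [hT]
      nlinarith [hbsup, (Real.exp_pos 2)]
    have hTpos : 0 < T := lt_of_lt_of_le (by linarith) hT2
    set R : ℝ := (m * T) / c with hR
    have hRpos : 0 < R := by
      apply div_pos _ hcpos
      positivity
    -- coercivity : outside the ball, G > K
    have hcoer : ∀ x ∈ S, R < ‖x‖ → K < G x := by
      intro x hx hxR
      have h1 : (m : ℝ) * T < c * ‖x‖ := by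
        rw [hR] at hxR
        calc (m:ℝ) * T = c * ((m * T)/c) := by field_simp
          _ < c * ‖x‖ := by exact mul_lt_mul_of_pos_left hxR hcpos
      have h2 : ∑ _i : Fin m, T ≤ ∑ i, A.mulVec x i := by
        rw [Finset.sum_const, Finset.card_univ, Fintype.card_fin, nsmul_eq_mul]
        exact le_trans h1.le (hlow x hx)
      obtain ⟨i, _, hi⟩ := Finset.exists_le_of_sum_le Finset.univ_nonempty h2
      have hvi : T ≤ A.mulVec x i := hi
      have h3 : klPhi (b i) (A.mulVec x i) ≤ G x :=
        Finset.single_le_sum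
          (fun k _ => klPhi_nonneg (b k) (hb k) (hv_nonneg x hx k)) (Finset.mem_univ i)
      have h4 : A.mulVec x i ≤ klPhi (b i) (A.mulVec x i) :=
        klPhi_big (b i) (hb i) (le_trans (hT1 i) hvi)
      linarith [hT2]
    -- existence of minimizer on compact set
    have hSclosed : IsClosed S := by
      have : S = ⋂ j, {x : Fin n → ℝ | 0 ≤ x j} := by
        ext x; simp [hS, Set.mem_iInter]
      rw [this]
      exact isClosed_iInter fun j => isClosed_le continuous_const (continuous_apply j)
    have hcpt : IsCompact (S ∩ Metric.closedBall 0 R) :=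
      (isCompact_closedBall 0 R).inter_left hSclosed
    have h0mem : (0 : Fin n → ℝ) ∈ S ∩ Metric.closedBall 0 R := by
      constructor
      · intro j; exact le_refl 0
      · simp [hRpos.le]
    obtain ⟨xstar, hxstarmem, hxstarmin⟩ :=
      hcpt.exists_isMinOn ⟨0, h0mem⟩ hGcont.continuousOn
    have hxstarS : xstar ∈ S := hxstarmem.1
    have hminstar : IsMinOn G S xstar := by
      rw [isMinOn_iff]
      intro x hx
      by_cases hxR : ‖x‖ ≤ R
      · exact (isMinOn_iff.mp hxstarmin) x ⟨hx, by simpa [Metric.mem_closedBall, dist_zero_right] using hxR⟩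
      · push_neg at hxR
        have h1 : G xstar ≤ G 0 := (isMinOn_iff.mp hxstarmin) 0 h0mem
        have h2 := hcoer x hx hxR
        rw [hG0] at h1
        linarith
    -- strict convexity at midpoint
    have hmid : ∀ x ∈ S, ∀ y ∈ S, x ≠ y →
        G (fun j => x j / 2 + y j / 2) < G x / 2 + G y / 2 := by
      intro x hx y hy hxy
      have hz : ∀ i, A.mulVec (fun j => x j / 2 + y j / 2) i
          = A.mulVec x i / 2 + A.mulVec y i / 2 := by
        intro i
        simp only [Matrix.mulVec, dotProduct]
        rw [Finset.sum_div, Finset.sum_div, ← Finset.sum_add_distrib]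
        exact Finset.sum_congr rfl fun j _ => by ring
      have hvw : A.mulVec x ≠ A.mulVec y := by
        intro h
        apply hxy
        have : A.mulVec (x - y) = 0 := by
          rw [Matrix.mulVec_sub, h, sub_self]
        have := hker _ this
        exact sub_eq_zero.mp this
      obtain ⟨i0, hi0⟩ := Function.ne_iff.mp hvw
      have hG1 : G (fun j => x j / 2 + y j / 2)
          = ∑ i, klPhi (b i) (A.mulVec x i / 2 + A.mulVec y i / 2) := by
        simp only [G]
        exact Finset.sum_congr rfl fun i _ => by rw [hz i]
      have hG2 : G x / 2 + G y / 2
          = ∑ i, (klPhi (b i) (A.mulVec x i) / 2 + klPhi (b i) (A.mulVec y i) / 2) := by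
        simp only [hG]
        rw [Finset.sum_div, Finset.sum_div, ← Finset.sum_add_distrib]
      rw [hG1, hG2]
      apply Finset.sum_lt_sum
      · intro i _
        exact klPhi_convex (b i) (hb i) (hv_nonneg x hx i) (hv_nonneg y hy i)
      · exact ⟨i0, Finset.mem_univ i0,
          klPhi_strictConvex (b i0) (hb i0) (hv_nonneg x hx i0) (hv_nonneg y hy i0) hi0⟩
    refine ⟨xstar, hxstarS, hminstar, ?_⟩
    intro y hyS hminy
    by_contra hne
    have hyS' : y ∈ S := hyS
    have h1 : G y ≤ G xstar := (isMinOn_iff.mp hminy) xstar hxstarS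
    have h2 : G xstar ≤ G y := (isMinOn_iff.mp hminstar) y hyS'
    have heq : G y = G xstar := le_antisymm h1 h2
    set z : Fin n → ℝ := fun j => y j / 2 + xstar j / 2 with hzdef
    have hzS : z ∈ S := fun j => by
      have := hyS j; have := hxstarS j
      simp only [hzdef]; positivity
    have h3 := hmid y hyS' xstar hxstarS hne
    have h4 : G xstar ≤ G z := (isMinOn_iff.mp hminstar) z hzS
    rw [heq] at h3
    simp only [hzdef] at h4
    linarith
end

section
/- The function f(x) = KL(Ax, b) with A having nonnegative entries, nonzero rows, and b strictly positive, is coercive on ℝ₊ⁿ (f(x) → +∞ as ‖x‖ → +∞ within ℝ₊ⁿ), provided ker A ∩ ℝ₊ⁿ = {0}. -/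
open Real Finset

lemma kl_term_nonneg (s c : ℝ) (hs : 0 ≤ s) (hc : 0 < c) :
    0 ≤ s * Real.log (s / c) - s + c := by
  rcases eq_or_lt_of_le hs with h | h
  · rw [← h]; simp; positivity
  · have h1 : Real.log (c / s) ≤ c / s - 1 := Real.log_le_sub_one_of_pos (by positivity)
    have h2 : Real.log (c / s) = - Real.log (s / c) := by
      rw [← Real.log_inv]; congr 1; field_simp
    have h3 : s * (c / s - 1) = c - s := by field_simp
    have h4 := mul_le_mul_of_nonneg_left h1 hs
    rw [h2, h3] at h4
    linarith

/-- Coercivity of `f(x) = KL(Ax, b)` on the nonnegative orthant when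
`ker A ∩ ℝ₊ⁿ = {0}`. -/
theorem stmt12 (m n : ℕ) (A : Matrix (Fin m) (Fin n) ℝ)
    (hA : ∀ i j, 0 ≤ A i j) (hrows : ∀ i, A i ≠ 0)
    (hker : ∀ x : EuclideanSpace ℝ (Fin n), (∀ j, 0 ≤ x j) →
      A.mulVec x = 0 → x = 0)
    (b : Fin m → ℝ) (hb : ∀ i, 0 < b i) :
    ∀ C : ℝ, ∃ R : ℝ, ∀ x : EuclideanSpace ℝ (Fin n), (∀ j, 0 ≤ x j) → R ≤ ‖x‖ →
      C ≤ ∑ i, ((∑ j, A i j * x j) * Real.log ((∑ j, A i j * x j) / b i)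
        - (∑ j, A i j * x j) + b i) := by
  intro C
  set g : EuclideanSpace ℝ (Fin n) → ℝ := fun x => ∑ i, ∑ j, A i j * x j with hg_def
  -- nonnegativity of row sums
  have hrow_nonneg : ∀ (x : EuclideanSpace ℝ (Fin n)), (∀ j, 0 ≤ x j) →
      ∀ i, 0 ≤ ∑ j, A i j * x j := by
    intro x hx i
    exact Finset.sum_nonneg fun j _ => mul_nonneg (hA i j) (hx j)
  set S : Set (EuclideanSpace ℝ (Fin n)) := {x | (∀ j, 0 ≤ x j) ∧ ‖x‖ = 1} with hS_def
  by_cases hSne : S.Nonempty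
  · -- continuity of g
    have hg_cont : Continuous g := by
      apply continuous_finset_sum
      intro i _
      apply continuous_finset_sum
      intro j _
      exact (continuous_const.mul ((EuclideanSpace.proj j : EuclideanSpace ℝ (Fin n) →L[ℝ] ℝ).continuous))
    have hS_closed : IsClosed S := by
      have h1 : IsClosed {x : EuclideanSpace ℝ (Fin n) | ∀ j, 0 ≤ x j} := by
        have : {x : EuclideanSpace ℝ (Fin n) | ∀ j, 0 ≤ x j} =
            ⋂ j, {x : EuclideanSpace ℝ (Fin n) | 0 ≤ x j} := by
          ext x; simp [Set.mem_iInter]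
        rw [this]
        exact isClosed_iInter fun j => isClosed_le continuous_const
          (EuclideanSpace.proj j : EuclideanSpace ℝ (Fin n) →L[ℝ] ℝ).continuous
      exact h1.inter (isClosed_eq continuous_norm continuous_const)
    have hS_compact : IsCompact S := by
      apply IsCompact.of_isClosed_subset (isCompact_closedBall (0 : EuclideanSpace ℝ (Fin n)) 1)
        hS_closed
      intro x hx
      simp [Metric.mem_closedBall, dist_zero_right, hx.2]
    obtain ⟨x₀, hx₀S, hmin⟩ := hS_compact.exists_isMinOn hSne hg_cont.continuousOn
    set δ : ℝ := g x₀ with hδ_def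
    have hδ_pos : 0 < δ := by
      rcases lt_or_eq_of_le (Finset.sum_nonneg fun i _ => hrow_nonneg x₀ hx₀S.1 i) with h | h
      · exact h
      · exfalso
        have hz := (Finset.sum_eq_zero_iff_of_nonneg
          (fun i _ => hrow_nonneg x₀ hx₀S.1 i)).mp h.symm
        have : A.mulVec x₀ = 0 := by
          funext i
          simpa [Matrix.mulVec, dotProduct] using hz i (Finset.mem_univ i)
        have := hker x₀ hx₀S.1 this
        rw [this] at hx₀S
        simpa using hx₀S.2
    -- m > 0
    have hm : 0 < m := by
      rcases Nat.eq_zero_or_pos m with h | h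
      · exfalso
        revert hδ_pos
        subst h
        simp [hδ_def, hg_def]
      · exact h
    -- max of b
    obtain ⟨iB, _, hiB⟩ := Finset.exists_max_image (Finset.univ : Finset (Fin m)) b
      ⟨⟨0, hm⟩, Finset.mem_univ _⟩
    set B := b iB with hB_def
    have hB_pos : 0 < B := hb iB
    set c : ℝ := Real.log B + 1 with hc_def
    set K : ℝ := max (Real.exp (c + 1)) (max C 1) with hK_def
    have hK1 : 1 ≤ K := le_trans (le_max_right C 1) (le_max_right _ _)
    refine ⟨m * K / δ, ?_⟩
    intro x hx hR
    have hxnorm : 0 < ‖x‖ := lt_of_lt_of_le (by positivity) hR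
    -- g x ≥ δ * ‖x‖
    have hgx : δ * ‖x‖ ≤ g x := by
      set u : EuclideanSpace ℝ (Fin n) := ‖x‖⁻¹ • x with hu_def
      have hu_norm : ‖u‖ = 1 := by
        rw [hu_def, norm_smul, norm_inv, norm_norm, inv_mul_cancel₀ hxnorm.ne']
      have hu_nonneg : ∀ j, 0 ≤ u j := by
        intro j
        have : u j = ‖x‖⁻¹ * x j := rfl
        rw [this]
        exact mul_nonneg (by positivity) (hx j)
      have huS : u ∈ S := ⟨hu_nonneg, hu_norm⟩
      have h1 : δ ≤ g u := hmin huS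
      have h2 : g u = ‖x‖⁻¹ * g x := by
        simp only [hg_def]
        rw [Finset.mul_sum]
        congr 1; funext i
        rw [Finset.mul_sum]
        congr 1; funext j
        have : u j = ‖x‖⁻¹ * x j := rfl
        rw [this]; ring
      have h3 : δ * ‖x‖ ≤ ‖x‖⁻¹ * g x * ‖x‖ := by
        exact mul_le_mul_of_nonneg_right (h2 ▸ h1) hxnorm.le
      calc δ * ‖x‖ ≤ ‖x‖⁻¹ * g x * ‖x‖ := h3
        _ = g x := by field_simp
    -- pick max row
    obtain ⟨i₀, _, hi₀⟩ := Finset.exists_max_image (Finset.univ : Finset (Fin m))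
      (fun i => ∑ j, A i j * x j) ⟨⟨0, hm⟩, Finset.mem_univ _⟩
    set s : ℝ := ∑ j, A i₀ j * x j with hs_def
    have hsum_le : g x ≤ m * s := by
      calc g x = ∑ i, ∑ j, A i j * x j := rfl
        _ ≤ ∑ _i : Fin m, s := Finset.sum_le_sum fun i _ => hi₀ i (Finset.mem_univ i)
        _ = m * s := by simp [Finset.sum_const, nsmul_eq_mul]
    have hsK : K ≤ s := by
      have h1 : m * K ≤ m * s := by
        have : m * K = (m * K / δ) * δ := by field_simp
        calc m * K = (m * K / δ) * δ := this
          _ ≤ ‖x‖ * δ := mul_le_mul_of_nonneg_right hR hδ_pos.le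
          _ = δ * ‖x‖ := mul_comm _ _
          _ ≤ g x := hgx
          _ ≤ m * s := hsum_le
      have hm' : (0:ℝ) < m := Nat.cast_pos.mpr hm
      exact le_of_mul_le_mul_left h1 hm'
    have hs_pos : 0 < s := lt_of_lt_of_le (by linarith) hsK
    -- each term nonneg
    have hterm_nonneg : ∀ i, 0 ≤ (∑ j, A i j * x j) * Real.log ((∑ j, A i j * x j) / b i)
        - (∑ j, A i j * x j) + b i := fun i =>
      kl_term_nonneg _ _ (hrow_nonneg x hx i) (hb i)
    have hbound : s * (Real.log s - c) ≤ s * Real.log (s / b i₀) - s + b i₀ := by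
      have hlog : Real.log s - c ≤ Real.log (s / b i₀) - 1 := by
        rw [Real.log_div hs_pos.ne' (hb i₀).ne']
        have : Real.log (b i₀) ≤ Real.log B := Real.log_le_log (hb i₀) (hiB i₀ (Finset.mem_univ i₀))
        simp only [hc_def]; linarith
      nlinarith [hs_pos, (hb i₀).le, mul_le_mul_of_nonneg_left hlog hs_pos.le]
    have hlogK : c + 1 ≤ Real.log s := by
      have h1 : Real.exp (c+1) ≤ s := le_trans (le_max_left _ _) hsK
      calc c + 1 = Real.log (Real.exp (c+1)) := (Real.log_exp _).symm
        _ ≤ Real.log s := Real.log_le_log (Real.exp_pos _) h1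
    have hfinal : C ≤ s * (Real.log s - c) := by
      have h1 : 1 ≤ Real.log s - c := by linarith
      have h2 : s ≤ s * (Real.log s - c) := by nlinarith
      have h3 : C ≤ K := le_trans (le_max_left C 1) (le_max_right _ _)
      linarith
    calc C ≤ s * (Real.log s - c) := hfinal
      _ ≤ s * Real.log (s / b i₀) - s + b i₀ := hbound
      _ ≤ ∑ i, ((∑ j, A i j * x j) * Real.log ((∑ j, A i j * x j) / b i)
          - (∑ j, A i j * x j) + b i) := by
        exact Finset.single_le_sum (fun i _ => hterm_nonneg i) (Finset.mem_univ i₀)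
  · -- S empty: every nonneg x has norm 0
    refine ⟨1, ?_⟩
    intro x hx hR
    exfalso
    have hxnorm : 0 < ‖x‖ := lt_of_lt_of_le one_pos hR
    apply hSne
    refine ⟨‖x‖⁻¹ • x, fun j => ?_, ?_⟩
    · have : ((‖x‖⁻¹ • x : EuclideanSpace ℝ (Fin n))) j = ‖x‖⁻¹ * x j := rfl
      rw [this]; exact mul_nonneg (by positivity) (hx j)
    · rw [norm_smul, norm_inv, norm_norm, inv_mul_cancel₀ hxnorm.ne']
end

section
/- For the Boltzmann–Shannon entropy h(x) = Σⱼ xⱼ log xⱼ on ℝ₊ⁿ, for every x ∈ ℝ₊ⁿ and t ∈ ℝ, the sublevel set {y ∈ int ℝ₊ⁿ : D_h(x, y) ≤ t} is bounded, and a sequence (x^k) in int ℝ₊ⁿ converges to x ∈ ℝ₊ⁿ if and only if D_h(x, x^k) → 0. -/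
open Filter

lemma key_ineq (x y : ℝ) (hx : 0 ≤ x) (hy : 0 < y) :
    (Real.sqrt y - Real.sqrt x)^2 ≤ x * Real.log (x / y) - x + y := by
  rcases hx.eq_or_lt with h | h
  · simp [← h, Real.sq_sqrt hy.le]
  · have hsx : 0 < Real.sqrt x := Real.sqrt_pos.2 h
    have hsy : 0 < Real.sqrt y := Real.sqrt_pos.2 hy
    have h1 : Real.log (Real.sqrt y / Real.sqrt x) ≤ Real.sqrt y / Real.sqrt x - 1 :=
      Real.log_le_sub_one_of_pos (by positivity)
    have h2 : Real.log (Real.sqrt y / Real.sqrt x) = (Real.log y - Real.log x) / 2 := by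
      rw [Real.log_div hsy.ne' hsx.ne', Real.log_sqrt hy.le, Real.log_sqrt h.le]; ring
    have h3 : Real.log (x / y) = Real.log x - Real.log y := Real.log_div h.ne' hy.ne'
    have h4 : Real.sqrt x * Real.sqrt x = x := Real.mul_self_sqrt h.le
    have h5 : Real.sqrt y * Real.sqrt y = y := Real.mul_self_sqrt hy.le
    have h6 : x * ((Real.log y - Real.log x) / 2) ≤ x * (Real.sqrt y / Real.sqrt x - 1) :=
      mul_le_mul_of_nonneg_left (h2 ▸ h1) h.le
    have h7 : x * (Real.sqrt y / Real.sqrt x - 1) = Real.sqrt x * Real.sqrt y - x := by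
      field_simp; nlinarith [h4]
    nlinarith [h6, h7]

lemma term_nonneg (x y : ℝ) (hx : 0 ≤ x) (hy : 0 < y) :
    0 ≤ x * Real.log (x / y) - x + y :=
  le_trans (sq_nonneg _) (key_ineq x y hx hy)

lemma euclid_tendsto_iff {n : ℕ} (xk : ℕ → EuclideanSpace ℝ (Fin n))
    (x : EuclideanSpace ℝ (Fin n)) :
    Tendsto xk atTop (nhds x) ↔ ∀ j, Tendsto (fun k => xk k j) atTop (nhds (x j)) := by
  constructor
  · intro h j
    exact (((continuous_apply j).comp
      (PiLp.continuousLinearEquiv 2 ℝ (fun _ : Fin n => ℝ)).continuous).tendsto x).comp h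
  · intro h
    have h2 : Tendsto (fun k => (fun j => xk k j)) atTop (nhds (fun j => x j)) :=
      tendsto_pi_nhds.2 h
    exact (((PiLp.continuousLinearEquiv 2 ℝ (fun _ : Fin n => ℝ)).symm.continuous.tendsto
      _).comp h2 : _)

/-- For the Boltzmann–Shannon entropy, the Bregman (generalized KL) divergence has bounded
sublevel sets in its second argument, and convergence of a sequence of the interior of the
orthant to a point of the orthant is equivalent to convergence of the divergence to `0`. -/
theorem stmt13 (n : ℕ) :
    (∀ x : EuclideanSpace ℝ (Fin n), (∀ j, 0 ≤ x j) → ∀ t : ℝ,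
      Bornology.IsBounded {y : EuclideanSpace ℝ (Fin n) | (∀ j, 0 < y j) ∧
        (∑ j, (x j * Real.log (x j / y j) - x j + y j)) ≤ t}) ∧
    (∀ (xk : ℕ → EuclideanSpace ℝ (Fin n)) (x : EuclideanSpace ℝ (Fin n)),
      (∀ k j, 0 < xk k j) → (∀ j, 0 ≤ x j) →
      (Tendsto xk atTop (nhds x) ↔
        Tendsto (fun k => ∑ j, (x j * Real.log (x j / xk k j) - x j + xk k j))
          atTop (nhds 0))) := by
  constructor
  · -- bounded sublevel sets
    intro x hx t
    rw [isBounded_iff_forall_norm_le]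
    refine ⟨Real.sqrt (∑ j : Fin n, ((Real.sqrt (x j) + Real.sqrt t)^2)^2), ?_⟩
    rintro y ⟨hy, hsum⟩
    have hterm : ∀ j, 0 ≤ x j * Real.log (x j / y j) - x j + y j :=
      fun j => term_nonneg _ _ (hx j) (hy j)
    have hj : ∀ j, x j * Real.log (x j / y j) - x j + y j ≤ t := fun j =>
      le_trans (Finset.single_le_sum (fun i _ => hterm i) (Finset.mem_univ j)) hsum
    have hb : ∀ j, Real.sqrt (y j) ≤ Real.sqrt (x j) + Real.sqrt t := by
      intro j
      have hsq : (Real.sqrt (y j) - Real.sqrt (x j))^2 ≤ t :=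
        (key_ineq (x j) (y j) (hx j) (hy j)).trans (hj j)
      have h1 : Real.sqrt ((Real.sqrt (y j) - Real.sqrt (x j))^2) ≤ Real.sqrt t :=
        Real.sqrt_le_sqrt hsq
      rw [Real.sqrt_sq_eq_abs] at h1
      have := (le_abs_self _).trans h1
      linarith
    have hyj : ∀ j, y j ≤ (Real.sqrt (x j) + Real.sqrt t)^2 := by
      intro j
      calc y j = Real.sqrt (y j)^2 := (Real.sq_sqrt (hy j).le).symm
        _ ≤ (Real.sqrt (x j) + Real.sqrt t)^2 :=
          pow_le_pow_left₀ (Real.sqrt_nonneg _) (hb j) 2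
    rw [EuclideanSpace.norm_eq]
    apply Real.sqrt_le_sqrt
    apply Finset.sum_le_sum
    intro j _
    have h1 : ‖y j‖ = y j := by rw [Real.norm_eq_abs, abs_of_pos (hy j)]
    rw [h1]
    exact pow_le_pow_left₀ (hy j).le (hyj j) 2
  · intro xk x hpos hx
    rw [euclid_tendsto_iff]
    constructor
    · intro h
      have hsum : Tendsto (fun k => ∑ j : Fin n,
          (x j * Real.log (x j / xk k j) - x j + xk k j)) atTop
          (nhds (∑ j : Fin n, (0:ℝ))) := by
        apply tendsto_finset_sum
        intro j _
        rcases (hx j).eq_or_lt with hxj | hxj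
        · simpa [← hxj] using h j
        · have hc : Tendsto (fun y : ℝ => x j * Real.log (x j / y) - x j + y)
              (nhds (x j)) (nhds 0) := by
            have h1 : Tendsto (fun y : ℝ => x j / y) (nhds (x j)) (nhds 1) := by
              have := (tendsto_const_nhds (x := x j)).div tendsto_id hxj.ne'
              simpa [div_self hxj.ne', Pi.div_def] using this
            have h2 : Tendsto (fun y : ℝ => Real.log (x j / y)) (nhds (x j)) (nhds 0) := by
              have := (Real.continuousAt_log one_ne_zero).tendsto.comp h1
              simpa [Function.comp_def] using this
            have := ((tendsto_const_nhds (x := x j)).mul h2).sub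
              (tendsto_const_nhds (x := x j)) |>.add tendsto_id
            simpa using this
          exact hc.comp (h j)
      simpa using hsum
    · intro h j
      have hterm : ∀ k i, 0 ≤ x i * Real.log (x i / xk k i) - x i + xk k i :=
        fun k i => term_nonneg _ _ (hx i) (hpos k i)
      have htj : Tendsto (fun k => x j * Real.log (x j / xk k j) - x j + xk k j)
          atTop (nhds 0) :=
        squeeze_zero (fun k => hterm k j)
          (fun k => Finset.single_le_sum (fun i _ => hterm k i) (Finset.mem_univ j)) h
      have hsq0 : Tendsto (fun k => (Real.sqrt (xk k j) - Real.sqrt (x j))^2)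
          atTop (nhds 0) :=
        squeeze_zero (fun k => sq_nonneg _)
          (fun k => key_ineq (x j) (xk k j) (hx j) (hpos k j)) htj
      have habs : Tendsto (fun k => Real.sqrt (xk k j) - Real.sqrt (x j)) atTop (nhds 0) := by
        rw [tendsto_zero_iff_abs_tendsto_zero]
        have h0 := (Real.continuous_sqrt.tendsto 0).comp hsq0
        rw [Real.sqrt_zero] at h0
        exact h0.congr fun k => by
          simp [Function.comp, Real.sqrt_sq_eq_abs]
      have hsqrt : Tendsto (fun k => Real.sqrt (xk k j)) atTop (nhds (Real.sqrt (x j))) := by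
        have := habs.add_const (Real.sqrt (x j))
        simpa using this
      have hfin : Tendsto (fun k => Real.sqrt (xk k j)^2) atTop (nhds (Real.sqrt (x j)^2)) :=
        hsqrt.pow 2
      rw [Real.sq_sqrt (hx j)] at hfin
      exact hfin.congr (fun k => Real.sq_sqrt (hpos k j).le)
end

section
/- Let T_γ(y) = argmin_{x∈X}{ γg(x) + h(x) + ⟨x, (1/M)Σᵢ(γ∇fᵢ(yᵢ) − ∇h(yᵢ))⟩ }. Then for every γ > 0, y ∈ (int dom h)^M, and u ∈ X: D_h(u, T_γ(y)) ≤ (1/M)Σᵢ D_h(u, yᵢ) − ((1 − γL)/M)Σᵢ D_h(T_γ(y), yᵢ) − γ(F(T_γ(y)) − F(u)), where F = (1/M)Σᵢ fᵢ + g. -/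
open scoped RealInnerProductSpace
open Filter
open Set Topology

lemma deriv_le_of_slope_le (q : ℝ → ℝ) (d c : ℝ) (hq : HasDerivAt q d 0)
    (hb : ∀ t ∈ Set.Ioc (0:ℝ) 1, q t - q 0 ≤ c * t) : d ≤ c := by
  have h1 : Tendsto (slope q 0) (𝓝[>] 0) (𝓝 d) :=
    (hasDerivAt_iff_tendsto_slope.mp hq).mono_left
      (nhdsWithin_mono _ (fun x hx => hx.ne'))
  refine le_of_tendsto h1 ?_
  filter_upwards [Ioc_mem_nhdsGT (by norm_num : (0:ℝ) < 1)] with t ht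
  rw [slope_def_field, div_le_iff₀ (by simpa using ht.1)]
  simpa [mul_comm] using hb t ht

lemma le_deriv_of_slope_ge (q : ℝ → ℝ) (d c : ℝ) (hq : HasDerivAt q d 0)
    (hb : ∀ t ∈ Set.Ioc (0:ℝ) 1, c * t ≤ q t - q 0) : c ≤ d := by
  have h1 : Tendsto (slope q 0) (𝓝[>] 0) (𝓝 d) :=
    (hasDerivAt_iff_tendsto_slope.mp hq).mono_left
      (nhdsWithin_mono _ (fun x hx => hx.ne'))
  refine ge_of_tendsto h1 ?_
  filter_upwards [Ioc_mem_nhdsGT (by norm_num : (0:ℝ) < 1)] with t ht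
  rw [slope_def_field, le_div_iff₀ (by simpa using ht.1)]
  simpa [mul_comm] using hb t ht

lemma curve_hasDerivAt {E : Type*} [NormedAddCommGroup E] [NormedSpace ℝ E]
    {φ : E → ℝ} {D : E →L[ℝ] ℝ} (a d : E) (hD : HasFDerivAt φ D a) :
    HasDerivAt (fun t : ℝ => φ (a + t • d)) (D d) 0 := by
  have hc : HasDerivAt (fun t : ℝ => a + t • d) d 0 := by
    simpa using ((hasDerivAt_id (0:ℝ)).smul_const d).const_add a
  have hD' : HasFDerivAt φ D (a + (0:ℝ) • d) := by simpa using hD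
  exact hD'.comp_hasDerivAt 0 hc

lemma inner_grad_le {E : Type*} [NormedAddCommGroup E] [InnerProductSpace ℝ E]
    (S : Set E) (φ : E → ℝ) (hφ : ConvexOn ℝ S φ)
    (a u : E) (ha : a ∈ S) (hu : u ∈ S) (D : E →L[ℝ] ℝ) (hD : HasFDerivAt φ D a) :
    D (u - a) ≤ φ u - φ a := by
  refine deriv_le_of_slope_le _ _ _ (curve_hasDerivAt a (u - a) hD) ?_
  intro t ht
  have hco : a + t • (u - a) = (1 - t) • a + t • u := by module
  have h2 := hφ.2 ha hu (by linarith [ht.2] : (0:ℝ) ≤ 1 - t) (le_of_lt ht.1) (by ring)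
  simp only [smul_eq_mul] at h2
  simp only [zero_smul, add_zero, hco]
  linarith


/-- The Bregman divergence `D_h(x,y) = h(x) − h(y) − ⟨∇h(y), x−y⟩`. -/
noncomputable def bregmanDiv {n : ℕ} (h : EuclideanSpace ℝ (Fin n) → ℝ)
    (x y : EuclideanSpace ℝ (Fin n)) : ℝ :=
  h x - h y - ⟪gradient h y, x - y⟫

/-- Contraction property of the operator `T_γ`: for any `u ∈ X`,
`D_h(u, T_γ(y)) ≤ (1/M)Σᵢ D_h(u,yᵢ) − ((1−γL)/M)Σᵢ D_h(T_γ(y),yᵢ) − γ(F(T_γ(y)) − F(u))`. -/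
theorem stmt16 (n M : ℕ) (hM : 0 < M)
    (X : Set (EuclideanSpace ℝ (Fin n)))
    (h g : EuclideanSpace ℝ (Fin n) → ℝ)
    (f : Fin M → EuclideanSpace ℝ (Fin n) → ℝ) (L : ℝ)
    (hXclosed : IsClosed X) (hXconv : Convex ℝ X) (hXint : (interior X).Nonempty)
    (hhconv : ConvexOn ℝ X h) (hhlsc : LowerSemicontinuous h)
    (hhdiff : DifferentiableOn ℝ h (interior X))
    (hhstrict : StrictConvexOn ℝ (interior X) h)
    (hhLeg : ∀ (w : ℕ → EuclideanSpace ℝ (Fin n)) (u : EuclideanSpace ℝ (Fin n)),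
      (∀ k, w k ∈ interior X) → u ∈ frontier X → Tendsto w atTop (nhds u) →
      Tendsto (fun k => ‖gradient h (w k)‖) atTop atTop)
    (hgconv : ConvexOn ℝ Set.univ g) (hglsc : LowerSemicontinuous g)
    (hfconv : ∀ i, ConvexOn ℝ X (f i))
    (hfdiff : ∀ i, DifferentiableOn ℝ (f i) (interior X))
    (hL : 0 < L)
    (hrel : ∀ i, ConvexOn ℝ (interior X) (fun z => L * h z - f i z))
    (hsol : ∃ s, s ∈ X ∧
      IsMinOn (fun z => (M : ℝ)⁻¹ * ∑ i, f i z + g z) X s)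
    (hsolcpt : IsCompact
      {s | s ∈ X ∧ IsMinOn (fun z => (M : ℝ)⁻¹ * ∑ i, f i z + g z) X s})
    (γ : ℝ) (hγ : 0 < γ)
    (y : Fin M → EuclideanSpace ℝ (Fin n)) (hy : ∀ i, y i ∈ interior X)
    (p : EuclideanSpace ℝ (Fin n)) (hp : p ∈ interior X)
    (hpmin : IsMinOn (fun z => γ * g z + h z +
      ⟪z, (M : ℝ)⁻¹ • ∑ i, (γ • gradient (f i) (y i) - gradient h (y i))⟫) X p) :
    ∀ u ∈ X,
      bregmanDiv h u p ≤
        (M : ℝ)⁻¹ * ∑ i, bregmanDiv h u (y i)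
          - (1 - γ * L) / M * ∑ i, bregmanDiv h p (y i)
          - γ * (((M : ℝ)⁻¹ * ∑ i, f i p + g p) - ((M : ℝ)⁻¹ * ∑ i, f i u + g u)) := by
  intro u hu
  have hMne : (M:ℝ) ≠ 0 := Nat.cast_ne_zero.mpr hM.ne'
  have hpX : p ∈ X := interior_subset hp
  set v := (M : ℝ)⁻¹ • ∑ i, (γ • gradient (f i) (y i) - gradient h (y i)) with hv
  -- derivatives
  have hdh : ∀ z ∈ interior X, HasFDerivAt h (fderiv ℝ h z) z := fun z hz =>
    (hhdiff.differentiableAt (isOpen_interior.mem_nhds hz)).hasFDerivAt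
  have hdf : ∀ i, HasFDerivAt (f i) (fderiv ℝ (f i) (y i)) (y i) := fun i =>
    ((hfdiff i).differentiableAt (isOpen_interior.mem_nhds (hy i))).hasFDerivAt
  -- inner-gradient identity
  have hgi : ∀ (φ : EuclideanSpace ℝ (Fin n) → ℝ) (z w : EuclideanSpace ℝ (Fin n)),
      ⟪gradient φ z, w⟫ = fderiv ℝ φ z w := by
    intro φ z w
    rw [gradient]
    exact InnerProductSpace.toDual_symm_apply
  -- per-index key inequality
  have key : ∀ i, ⟪gradient (f i) (y i), u - p⟫ + f i p - f i u ≤ L * bregmanDiv h p (y i) := by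
    intro i
    have e3 := inner_grad_le X (f i) (hfconv i) (y i) u (interior_subset (hy i)) hu _ (hdf i)
    have hrelD : HasFDerivAt (fun z => L * h z - f i z)
        (L • fderiv ℝ h (y i) - fderiv ℝ (f i) (y i)) (y i) :=
      ((hdh _ (hy i)).const_mul L).sub (hdf i)
    have e2 := inner_grad_le (interior X) _ (hrel i) (y i) p (hy i) hp _ hrelD
    simp only [ContinuousLinearMap.sub_apply, ContinuousLinearMap.smul_apply,
      smul_eq_mul, map_sub] at e2 e3
    simp only [bregmanDiv, hgi, map_sub]
    ring_nf
    ring_nf at e2 e3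
    linarith
  -- optimality inequality
  have hmin : γ * g p + ⟪p, v⟫ - (γ * g u + ⟪u, v⟫) ≤ ⟪gradient h p, u - p⟫ := by
    rw [hgi]
    refine le_deriv_of_slope_ge _ _ _ (curve_hasDerivAt p (u - p) (hdh p hp)) ?_
    intro t ht
    have hco : p + t • (u - p) = (1 - t) • p + t • u := by module
    have hzX : ((1 - t) • p + t • u) ∈ X :=
      hXconv hpX hu (by linarith [ht.2]) ht.1.le (by ring)
    have hmv := isMinOn_iff.mp hpmin _ hzX
    have hgz := hgconv.2 (mem_univ p) (mem_univ u)
      (by linarith [ht.2] : (0:ℝ) ≤ 1 - t) ht.1.le (by ring)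
    simp only [smul_eq_mul] at hgz
    have hgz' := mul_le_mul_of_nonneg_left hgz hγ.le
    have hiz : ⟪(1 - t) • p + t • u, v⟫ = (1 - t) * ⟪p, v⟫ + t * ⟪u, v⟫ := by
      rw [inner_add_left, real_inner_smul_left, real_inner_smul_left]
    simp only [zero_smul, add_zero, hco]
    rw [hiz] at hmv
    nlinarith [hmv, hgz']
  -- three point identity summed
  have h3pt : ∀ i : Fin M, bregmanDiv h u p = bregmanDiv h u (y i) - bregmanDiv h p (y i)
      + (⟪gradient h (y i), u - p⟫ - ⟪gradient h p, u - p⟫) := by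
    intro i
    simp only [bregmanDiv, inner_sub_right]
    ring
  have hsum3 : (M:ℝ) * bregmanDiv h u p =
      (∑ i, bregmanDiv h u (y i)) - (∑ i, bregmanDiv h p (y i))
        + ((∑ i, ⟪gradient h (y i), u - p⟫) - (M:ℝ) * ⟪gradient h p, u - p⟫) := by
    calc (M:ℝ) * bregmanDiv h u p = ∑ _i : Fin M, bregmanDiv h u p := by
          simp [Finset.sum_const, mul_comm]
      _ = ∑ i, (bregmanDiv h u (y i) - bregmanDiv h p (y i)
            + (⟪gradient h (y i), u - p⟫ - ⟪gradient h p, u - p⟫)) :=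
          Finset.sum_congr rfl fun i _ => h3pt i
      _ = _ := by
          rw [Finset.sum_add_distrib, Finset.sum_sub_distrib, Finset.sum_sub_distrib]
          simp [Finset.sum_const, mul_comm]
          ring
  have hsumkey : (∑ i, ⟪gradient (f i) (y i), u - p⟫) + (∑ i, f i p) - (∑ i, f i u)
      ≤ L * ∑ i, bregmanDiv h p (y i) := by
    have h1 := Finset.sum_le_sum (fun i (_ : i ∈ Finset.univ) => key i)
    rw [← Finset.mul_sum] at h1
    calc _ = ∑ i, (⟪gradient (f i) (y i), u - p⟫ + f i p - f i u) := by
          rw [Finset.sum_sub_distrib, Finset.sum_add_distrib]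
      _ ≤ _ := h1
  -- expansion of ⟪z, v⟫
  have hip : ∀ z : EuclideanSpace ℝ (Fin n), ⟪z, v⟫ =
      (M:ℝ)⁻¹ * ∑ i, (γ * ⟪gradient (f i) (y i), z⟫ - ⟪gradient h (y i), z⟫) := by
    intro z
    rw [hv, real_inner_smul_right, inner_sum]
    congr 1
    refine Finset.sum_congr rfl fun i _ => ?_
    rw [inner_sub_right, real_inner_smul_right, real_inner_comm z, real_inner_comm z]
  have hdiff : ⟪u, v⟫ - ⟪p, v⟫ = (M:ℝ)⁻¹ *
      (γ * (∑ i, ⟪gradient (f i) (y i), u - p⟫) - ∑ i, ⟪gradient h (y i), u - p⟫) := by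
    rw [hip u, hip p, ← mul_sub]
    congr 1
    rw [← Finset.sum_sub_distrib, Finset.mul_sum, ← Finset.sum_sub_distrib]
    refine Finset.sum_congr rfl fun i _ => ?_
    simp only [inner_sub_right]
    ring
  -- final assembly
  have hDup : bregmanDiv h u p =
      (M:ℝ)⁻¹ * (∑ i, bregmanDiv h u (y i)) - (M:ℝ)⁻¹ * (∑ i, bregmanDiv h p (y i))
        + (M:ℝ)⁻¹ * (∑ i, ⟪gradient h (y i), u - p⟫) - ⟪gradient h p, u - p⟫ := by
    have h1 : bregmanDiv h u p = (M:ℝ)⁻¹ * ((M:ℝ) * bregmanDiv h u p) := by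
      field_simp
    rw [h1, hsum3]
    field_simp
    ring
  have hk : γ * (M:ℝ)⁻¹ * ((∑ i, ⟪gradient (f i) (y i), u - p⟫) + (∑ i, f i p) - (∑ i, f i u))
      ≤ γ * (M:ℝ)⁻¹ * (L * ∑ i, bregmanDiv h p (y i)) :=
    mul_le_mul_of_nonneg_left hsumkey (by positivity)
  have hmin' : γ * g p - γ * g u - ((M:ℝ)⁻¹ *
      (γ * (∑ i, ⟪gradient (f i) (y i), u - p⟫) - ∑ i, ⟪gradient h (y i), u - p⟫))
      ≤ ⟪gradient h p, u - p⟫ := by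
    rw [← hdiff]; linarith [hmin]
  rw [hDup, div_eq_mul_inv]
  nlinarith [hk, hmin']
end
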